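/- Let R be a ring and B a nonzero left R-module that is a brick (End_R(B) is a division ring). Consider the torsion pair (𝒯, ℱ) = (^{⊥₀}(B^{⊥₀}), B^{⊥₀}) cogenerated by B^{⊥₀}, where B^{⊥₀} = {M : Hom(B, M) = 0}. Then B is torsion, almost torsionfree with respect to this torsion pair: (1) B ∈ 𝒯; (2) every proper submodule of B lies in ℱ; (3) every short exact sequence 0 → F → M → B → 0 with F ∈ ℱ and M ∉ ℱ splits. -/

import Mathlib

universe u v
variable {R : Type u} [Ring R]

/-- The torsion class `⁽⊥₀⁾(B^{⊥₀})` of the torsion pair generated by `B`. -/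
def genTorsionClass (R : Type u) [Ring R] (B : ModuleCat.{v} R) :
    Set (ModuleCat.{v} R) :=
  {M | ∀ Y : ModuleCat.{v} R, (∀ g : ↑B →ₗ[R] ↑Y, g = 0) → ∀ f : ↑M →ₗ[R] ↑Y, f = 0}

/-- The torsionfree class `B^{⊥₀} = {M | Hom(B, M) = 0}` of the torsion pair
generated by `B`. -/
def genTorsionFreeClass (R : Type u) [Ring R] (B : ModuleCat.{v} R) :
    Set (ModuleCat.{v} R) :=
  {M | ∀ f : ↑B →ₗ[R] ↑M, f = 0}

/-- `B` is a brick: it is nonzero and every nonzero endomorphism is invertible. -/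
def IsBrick (R : Type u) [Ring R] (B : ModuleCat.{v} R) : Prop :=
  Nontrivial ↑B ∧ ∀ f : ↑B →ₗ[R] ↑B, f ≠ 0 → Function.Bijective f

/-- A brick `B` is torsion, almost torsionfree with respect to the torsion pair
`(⁽⊥₀⁾(B^{⊥₀}), B^{⊥₀})` generated by `B`: (1) `B` is torsion; (2) every proper
submodule of `B` is torsionfree; (3) every short exact sequence
`0 → F → M → B → 0` with `F` torsionfree and `M` not torsionfree splits. -/
theorem stmt_11 (B : ModuleCat.{v} R) (hB : IsBrick R B) :
    B ∈ genTorsionClass R B ∧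
    (∀ N : Submodule R ↑B, N ≠ ⊤ → ModuleCat.of R N ∈ genTorsionFreeClass R B) ∧
    (∀ (F M : ModuleCat.{v} R), F ∈ genTorsionFreeClass R B →
      ∀ (i : ↑F →ₗ[R] ↑M) (p : ↑M →ₗ[R] ↑B),
        Function.Injective i → Function.Surjective p →
        LinearMap.range i = LinearMap.ker p →
        M ∉ genTorsionFreeClass R B →
        ∃ s : ↑B →ₗ[R] ↑M, p ∘ₗ s = LinearMap.id) := by
  obtain ⟨hnt, hbij⟩ := hB
  refine ⟨?_, ?_, ?_⟩
  · intro Y hY f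
    exact hY f
  · intro N hN f
    by_contra hf
    have hb : (N.subtype ∘ₗ f) ≠ 0 := by
      intro h
      apply hf
      ext b
      have h1 : (f b).1 = 0 := congrArg (fun g => g b) h
      simpa using h1
    have hsurj := (hbij _ hb).2
    apply hN
    rw [Submodule.eq_top_iff']
    intro x
    obtain ⟨b, hbx⟩ := hsurj x
    have hx : x = (f b).1 := by rw [← hbx]; rfl
    rw [hx]
    exact (f b).2
  · intro F M hF i p hi hp hex hM
    simp only [genTorsionFreeClass, Set.mem_setOf_eq] at hM
    push_neg at hM
    obtain ⟨f, hf⟩ := hM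
    have hpf : (p ∘ₗ f) ≠ 0 := by
      intro h
      apply hf
      have hr : ∀ b, f b ∈ LinearMap.range i := by
        intro b
        rw [hex, LinearMap.mem_ker]
        exact congrArg (fun g => g b) h
      set e := LinearEquiv.ofInjective i hi
      have hg : (e.symm.toLinearMap ∘ₗ f.codRestrict (LinearMap.range i) hr) = 0 :=
        hF _
      ext b
      have := congrArg (fun g => i (g b)) hg
      simp only [LinearMap.comp_apply, LinearMap.map_zero, LinearMap.zero_apply] at this
      have h2 : i (e.symm (f.codRestrict (LinearMap.range i) hr b)) = f b := by
        have h3 := congrArg Subtype.val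
          (e.apply_symm_apply (f.codRestrict (LinearMap.range i) hr b))
        exact h3
      show f b = 0
      rw [← h2]
      exact this
    have hb := hbij _ hpf
    let e := LinearEquiv.ofBijective (p ∘ₗ f) hb
    refine ⟨f ∘ₗ e.symm.toLinearMap, ?_⟩
    ext b
    have : (p ∘ₗ f) (e.symm b) = b := e.apply_symm_apply b
    simpa using this
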